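/- For the Bayesian M-hypothesis nearest-neighbor test with full-support distributions P_1,…,P_M on finite alphabet X, the total error probability satisfies P(e) ≤ 2^{-n(min_{i≠j} C(P_i,P_j) - (|X|-1)·log₂(n+1)/n - (log₂ M)/n)}, where C is Chernoff information. -/
import Mathlib


open Finset
open scoped Classical

/-- Empirical type of a sequence. -/
noncomputable def typeOf {α : Type*} [Fintype α] [DecidableEq α] {n : ℕ} (xv : Fin n → α) :
    α → ℝ :=
  fun a => ((Finset.univ.filter fun i => xv i = a).card : ℝ) / n

/-- Base-2 KL divergence. -/
noncomputable def KL {α : Type*} [Fintype α] (P Q : α → ℝ) : ℝ :=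
  ∑ x, P x * Real.logb 2 (P x / Q x)

/-- Chernoff information with base-2 logarithm. -/
noncomputable def chernoff {α : Type*} [Fintype α] (P Q : α → ℝ) : ℝ :=
  - sInf ((fun l : ℝ => Real.logb 2 (∑ x, P x ^ l * Q x ^ (1 - l))) '' Set.Icc (0:ℝ) 1)

lemma aux_count_sum {α : Type*} [Fintype α] [DecidableEq α] {n : ℕ} (xv : Fin n → α)
    (f : α → ℝ) :
    ∑ x, ((Finset.univ.filter fun k => xv k = x).card : ℝ) * f x = ∑ k, f (xv k) := by
  have h : ∀ x : α, ((Finset.univ.filter fun k => xv k = x).card : ℝ) * f x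
      = ∑ k : Fin n, if xv k = x then f x else 0 := by
    intro x
    rw [Finset.card_filter]
    push_cast
    rw [Finset.sum_mul]
    refine Finset.sum_congr rfl fun k _ => ?_
    by_cases hk : xv k = x <;> simp [hk]
  rw [Finset.sum_congr rfl fun x _ => h x, Finset.sum_comm]
  refine Finset.sum_congr rfl fun k _ => ?_
  simp

lemma aux_prod_le {α : Type*} [Fintype α] [DecidableEq α] {n : ℕ} (hn : 0 < n)
    (xv : Fin n → α) (P Q : α → ℝ) (hP : ∀ x, 0 < P x) (hQ : ∀ x, 0 < Q x)
    (h : KL (typeOf xv) Q ≤ KL (typeOf xv) P) :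
    ∏ k, P (xv k) ≤ ∏ k, Q (xv k) := by
  have hn' : (0:ℝ) < n := by exact_mod_cast hn
  have key : (n:ℝ) * (KL (typeOf xv) P - KL (typeOf xv) Q)
      = ∑ k, (Real.logb 2 (Q (xv k)) - Real.logb 2 (P (xv k))) := by
    have hstep : (n:ℝ) * (KL (typeOf xv) P - KL (typeOf xv) Q)
        = ∑ x, ((Finset.univ.filter fun k => xv k = x).card : ℝ) *
            (Real.logb 2 (Q x) - Real.logb 2 (P x)) := by
      unfold KL typeOf
      rw [← Finset.sum_sub_distrib, Finset.mul_sum]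
      refine Finset.sum_congr rfl fun x _ => ?_
      set c : ℝ := ((Finset.univ.filter fun k => xv k = x).card : ℝ) with hc
      have hc0 : 0 ≤ c := by positivity
      rcases eq_or_lt_of_le hc0 with hz | hcp
      · rw [← hz]; simp
      · have hT : (0:ℝ) < c / n := by positivity
        have h1 : Real.logb 2 (c / n / P x) = Real.logb 2 (c/n) - Real.logb 2 (P x) :=
          Real.logb_div hT.ne' (hP x).ne'
        have h2 : Real.logb 2 (c / n / Q x) = Real.logb 2 (c/n) - Real.logb 2 (Q x) :=
          Real.logb_div hT.ne' (hQ x).ne'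
        rw [h1, h2]
        field_simp
        ring
    rw [hstep, aux_count_sum]
  have hsum : ∑ k, Real.logb 2 (P (xv k)) ≤ ∑ k, Real.logb 2 (Q (xv k)) := by
    have h0 : 0 ≤ (n:ℝ) * (KL (typeOf xv) P - KL (typeOf xv) Q) := by
      have hh := sub_nonneg.mpr h
      positivity
    rw [key, Finset.sum_sub_distrib] at h0
    linarith
  have hPp : (0:ℝ) < ∏ k, P (xv k) := Finset.prod_pos fun k _ => hP _
  have hQp : (0:ℝ) < ∏ k, Q (xv k) := Finset.prod_pos fun k _ => hQ _
  have hlogP : Real.logb 2 (∏ k, P (xv k)) = ∑ k, Real.logb 2 (P (xv k)) :=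
    Real.logb_prod _ _ fun k _ => (hP _).ne'
  have hlogQ : Real.logb 2 (∏ k, Q (xv k)) = ∑ k, Real.logb 2 (Q (xv k)) :=
    Real.logb_prod _ _ fun k _ => (hQ _).ne'
  have : Real.logb 2 (∏ k, P (xv k)) ≤ Real.logb 2 (∏ k, Q (xv k)) := by
    rw [hlogP, hlogQ]; exact hsum
  exact (Real.logb_le_logb one_lt_two hPp hQp).mp this

theorem stmt16 {α : Type*} [Fintype α] [DecidableEq α] {M n : ℕ} (hM : 2 ≤ M) (hn : 0 < n)
    (Ps : Fin M → α → ℝ)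
    (hpos : ∀ i x, 0 < Ps i x) (hsum : ∀ i, ∑ x, Ps i x = 1)
    (hdist : ∀ i j, i ≠ j → Ps i ≠ Ps j)
    (prior : Fin M → ℝ) (hprior : ∀ i, 0 < prior i) (hprior1 : ∑ i, prior i = 1)
    (d : (Fin n → α) → Fin M)
    (hd : ∀ (xv : Fin n → α) (j : Fin M),
      KL (typeOf xv) (Ps (d xv)) ≤ KL (typeOf xv) (Ps j)) :
    (∑ xv : Fin n → α, ∑ i, prior i * (if d xv = i then 0 else ∏ k, Ps i (xv k))) ≤
      (2:ℝ) ^ (-(n:ℝ) *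
        (sInf {y : ℝ | ∃ i j : Fin M, i ≠ j ∧ y = chernoff (Ps i) (Ps j)} -
          ((Fintype.card α : ℝ) - 1) * Real.logb 2 (n + 1) / n -
          Real.logb 2 M / n)) := by
  classical
  have hnR : (0:ℝ) < n := by exact_mod_cast hn
  have hαne : Nonempty α := by
    by_contra hcon
    have : IsEmpty α := not_nonempty_iff.mp hcon
    have h1 := hsum ⟨0, by omega⟩
    simp at h1
  set S : Set ℝ := {y : ℝ | ∃ i j : Fin M, i ≠ j ∧ y = chernoff (Ps i) (Ps j)} with hSdef
  have hSfin : S.Finite := by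
    apply Set.Finite.subset
      (Set.finite_range fun p : Fin M × Fin M => chernoff (Ps p.1) (Ps p.2))
    rintro y ⟨i, j, hij, rfl⟩
    exact ⟨(i, j), rfl⟩
  have hSbdd : BddBelow S := hSfin.bddBelow
  set Cm : ℝ := sInf S with hCm
  -- per misclassification-target bound
  have key : ∀ i j : Fin M, i ≠ j →
      (∑ xv ∈ Finset.univ.filter (fun xv : Fin n → α => d xv = j), ∏ k, Ps i (xv k))
        ≤ (2:ℝ) ^ (-(n:ℝ) * Cm) := by
    intro i j hij
    set A : ℝ := ∑ xv ∈ Finset.univ.filter (fun xv : Fin n → α => d xv = j),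
      ∏ k, Ps i (xv k) with hA
    have hA0 : 0 ≤ A :=
      Finset.sum_nonneg fun xv _ => Finset.prod_nonneg fun k _ => (hpos i _).le
    have hAle : ∀ l ∈ Set.Icc (0:ℝ) 1,
        A ≤ (∑ x, Ps i x ^ l * Ps j x ^ (1 - l)) ^ n := by
      rintro l ⟨hl0, hl1⟩
      have step1 : ∀ xv ∈ Finset.univ.filter (fun xv : Fin n → α => d xv = j),
          ∏ k, Ps i (xv k) ≤ ∏ k, (Ps i (xv k) ^ l * Ps j (xv k) ^ (1 - l)) := by
        intro xv hxv
        have hdj : d xv = j := by simpa using hxv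
        have hle : ∏ k, Ps i (xv k) ≤ ∏ k, Ps j (xv k) := by
          apply aux_prod_le hn xv _ _ (hpos i) (hpos j)
          have hh := hd xv i
          rwa [hdj] at hh
        have ha : (0:ℝ) < ∏ k, Ps i (xv k) := Finset.prod_pos fun k _ => hpos i _
        have hb : (0:ℝ) < ∏ k, Ps j (xv k) := Finset.prod_pos fun k _ => hpos j _
        calc ∏ k, Ps i (xv k)
            = (∏ k, Ps i (xv k)) ^ l * (∏ k, Ps i (xv k)) ^ (1 - l) := by
              rw [← Real.rpow_add ha]; simp
          _ ≤ (∏ k, Ps i (xv k)) ^ l * (∏ k, Ps j (xv k)) ^ (1 - l) := by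
              have := Real.rpow_le_rpow ha.le hle (by linarith : (0:ℝ) ≤ 1 - l)
              exact mul_le_mul_of_nonneg_left this (Real.rpow_nonneg ha.le l)
          _ = ∏ k, (Ps i (xv k) ^ l * Ps j (xv k) ^ (1 - l)) := by
              rw [← Real.finset_prod_rpow _ _ (fun k _ => (hpos i _).le) l,
                ← Real.finset_prod_rpow _ _ (fun k _ => (hpos j _).le) (1 - l),
                ← Finset.prod_mul_distrib]
      calc A ≤ ∑ xv ∈ Finset.univ.filter (fun xv : Fin n → α => d xv = j),
              ∏ k, (Ps i (xv k) ^ l * Ps j (xv k) ^ (1 - l)) :=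
            Finset.sum_le_sum step1
        _ ≤ ∑ xv : Fin n → α, ∏ k, (Ps i (xv k) ^ l * Ps j (xv k) ^ (1 - l)) :=
            Finset.sum_le_sum_of_subset_of_nonneg (Finset.filter_subset _ _)
              (fun xv _ _ => Finset.prod_nonneg fun k _ =>
                mul_nonneg (Real.rpow_nonneg (hpos i _).le _) (Real.rpow_nonneg (hpos j _).le _))
        _ = (∑ x, Ps i x ^ l * Ps j x ^ (1 - l)) ^ n := by
            rw [Finset.sum_pow', Fintype.piFinset_univ]
    -- reduce to the chernoff bound
    set img : Set ℝ :=
      (fun l : ℝ => Real.logb 2 (∑ x, Ps i x ^ l * Ps j x ^ (1 - l))) '' Set.Icc (0:ℝ) 1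
      with himgdef
    have himgne : img.Nonempty :=
      ⟨_, Set.mem_image_of_mem _ (by norm_num : (0:ℝ) ∈ Set.Icc (0:ℝ) 1)⟩
    have hAc : A ≤ (2:ℝ) ^ ((n:ℝ) * sInf img) := by
      rcases eq_or_lt_of_le hA0 with h0 | hApos
      · rw [← h0]; positivity
      · have hlb : Real.logb 2 A / n ≤ sInf img := by
          apply le_csInf himgne
          rintro y ⟨l, hl, rfl⟩
          have hSp : (0:ℝ) < ∑ x, Ps i x ^ l * Ps j x ^ (1 - l) :=
            Finset.sum_pos (fun x _ =>
              mul_pos (Real.rpow_pos_of_pos (hpos i x) _) (Real.rpow_pos_of_pos (hpos j x) _))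
              Finset.univ_nonempty
          have h2 : Real.logb 2 A ≤ (n:ℝ) * Real.logb 2 (∑ x, Ps i x ^ l * Ps j x ^ (1 - l)) := by
            calc Real.logb 2 A
                ≤ Real.logb 2 ((∑ x, Ps i x ^ l * Ps j x ^ (1 - l)) ^ n) :=
                  Real.logb_le_logb_of_le one_lt_two hApos (hAle l hl)
              _ = (n:ℝ) * Real.logb 2 (∑ x, Ps i x ^ l * Ps j x ^ (1 - l)) := by
                  rw [Real.logb_pow]
          rw [div_le_iff₀ hnR]
          linarith
        have hlog : Real.logb 2 A ≤ (n:ℝ) * sInf img := by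
          have h3 : Real.logb 2 A = Real.logb 2 A / n * n := by field_simp
          rw [h3, mul_comm ((n:ℝ)) (sInf img)]
          exact mul_le_mul_of_nonneg_right hlb hnR.le
        exact (Real.logb_le_iff_le_rpow one_lt_two hApos).mp hlog
    have hch : Cm ≤ chernoff (Ps i) (Ps j) := csInf_le hSbdd ⟨i, j, hij, rfl⟩
    have hch2 : (n:ℝ) * sInf img ≤ -(n:ℝ) * Cm := by
      have : sInf img = -(chernoff (Ps i) (Ps j)) := by
        rw [chernoff, neg_neg, himgdef]
      rw [this]
      nlinarith
    exact hAc.trans (Real.rpow_le_rpow_of_exponent_le one_le_two hch2)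
  -- per hypothesis error bound
  have herr : ∀ i : Fin M,
      (∑ xv : Fin n → α, if d xv = i then 0 else ∏ k, Ps i (xv k))
        ≤ ((M:ℝ) - 1) * (2:ℝ) ^ (-(n:ℝ) * Cm) := by
    intro i
    have h1 : (∑ xv : Fin n → α, if d xv = i then 0 else ∏ k, Ps i (xv k))
        = ∑ xv ∈ Finset.univ.filter (fun xv : Fin n → α => ¬ d xv = i), ∏ k, Ps i (xv k) := by
      rw [Finset.sum_filter]
      exact Finset.sum_congr rfl fun xv _ => by by_cases h : d xv = i <;> simp [h]
    rw [h1]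
    have hmap : ∀ xv ∈ Finset.univ.filter (fun xv : Fin n → α => ¬ d xv = i),
        d xv ∈ Finset.univ.erase i := by
      intro xv hxv
      simp only [Finset.mem_filter, Finset.mem_univ, true_and] at hxv
      exact Finset.mem_erase.mpr ⟨hxv, Finset.mem_univ _⟩
    calc ∑ xv ∈ Finset.univ.filter (fun xv : Fin n → α => ¬ d xv = i), ∏ k, Ps i (xv k)
        = ∑ j ∈ Finset.univ.erase i,
            ∑ xv ∈ (Finset.univ.filter (fun xv : Fin n → α => ¬ d xv = i)).filter
              (fun xv => d xv = j), ∏ k, Ps i (xv k) :=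
          (Finset.sum_fiberwise_of_maps_to hmap _).symm
      _ ≤ ∑ j ∈ Finset.univ.erase i, (2:ℝ) ^ (-(n:ℝ) * Cm) := by
          apply Finset.sum_le_sum
          intro j hj
          have hij : i ≠ j := fun h => (Finset.mem_erase.mp hj).1 h.symm
          refine le_trans ?_ (key i j hij)
          apply Finset.sum_le_sum_of_subset_of_nonneg
          · intro xv hxv
            simp only [Finset.mem_filter, Finset.mem_univ, true_and] at hxv ⊢
            exact hxv.2
          · intro xv _ _
            exact Finset.prod_nonneg fun k _ => (hpos i _).le
      _ = ((M:ℝ) - 1) * (2:ℝ) ^ (-(n:ℝ) * Cm) := by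
          rw [Finset.sum_const, Finset.card_erase_of_mem (Finset.mem_univ _),
            Finset.card_univ, Fintype.card_fin, nsmul_eq_mul,
            Nat.cast_sub (by omega : 1 ≤ M)]
          norm_num
  -- combine
  have hLHS : (∑ xv : Fin n → α, ∑ i, prior i * (if d xv = i then 0 else ∏ k, Ps i (xv k)))
      ≤ ((M:ℝ) - 1) * (2:ℝ) ^ (-(n:ℝ) * Cm) := by
    rw [Finset.sum_comm]
    calc ∑ i, ∑ xv : Fin n → α, prior i * (if d xv = i then 0 else ∏ k, Ps i (xv k))
        = ∑ i, prior i * ∑ xv : Fin n → α, (if d xv = i then 0 else ∏ k, Ps i (xv k)) := by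
          exact Finset.sum_congr rfl fun i _ => (Finset.mul_sum _ _ _).symm
      _ ≤ ∑ i, prior i * (((M:ℝ) - 1) * (2:ℝ) ^ (-(n:ℝ) * Cm)) := by
          apply Finset.sum_le_sum
          intro i _
          exact mul_le_mul_of_nonneg_left (herr i) (hprior i).le
      _ = ((M:ℝ) - 1) * (2:ℝ) ^ (-(n:ℝ) * Cm) := by
          rw [← Finset.sum_mul, hprior1, one_mul]
  refine hLHS.trans ?_
  -- RHS arithmetic
  have hexp : -(n:ℝ) * (Cm - ((Fintype.card α : ℝ) - 1) * Real.logb 2 (n + 1) / n -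
      Real.logb 2 M / n)
      = (-(n:ℝ) * Cm + ((Fintype.card α : ℝ) - 1) * Real.logb 2 (n + 1)) + Real.logb 2 M := by
    field_simp
    ring
  rw [hexp, Real.rpow_add two_pos, Real.rpow_add two_pos]
  have hMpos : (0:ℝ) < M := by exact_mod_cast (by omega : 0 < M)
  have hlogM : (2:ℝ) ^ Real.logb 2 (M:ℝ) = (M:ℝ) :=
    Real.rpow_logb two_pos (by norm_num) hMpos
  rw [hlogM]
  have hB : (1:ℝ) ≤ (2:ℝ) ^ (((Fintype.card α : ℝ) - 1) * Real.logb 2 (n + 1)) := by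
    apply Real.one_le_rpow one_le_two
    have hc1 : (1:ℝ) ≤ (Fintype.card α : ℝ) := by
      exact_mod_cast Fintype.card_pos_iff.mpr hαne
    have hlogn : 0 ≤ Real.logb 2 ((n:ℝ) + 1) := Real.logb_nonneg one_lt_two (by linarith)
    nlinarith
  have hP2 : (0:ℝ) < (2:ℝ) ^ (-(n:ℝ) * Cm) := Real.rpow_pos_of_pos two_pos _
  have h1 : ((M:ℝ) - 1) * (2:ℝ) ^ (-(n:ℝ) * Cm)
      ≤ (2:ℝ) ^ (-(n:ℝ) * Cm) * 1 * (M:ℝ) := by nlinarith [hP2]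
  refine h1.trans ?_
  exact mul_le_mul_of_nonneg_right (mul_le_mul_of_nonneg_left hB hP2.le) hMpos.le
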